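/- The centralizer of X decomposes as Z_L(X) = Z_L(X,H,Y) ⊕ g_1 ⊕ g_2, an internal direct sum of vector subspaces of L. -/

import Mathlib

open Module LieAlgebra

private lemma aux_eig_zero {L : Type*} [AddCommGroup L] [Module ℝ L]
    (f : Module.End ℝ L) {μ : ℝ} {x y : L}
    (hx : x ∈ f.eigenspace μ) (hy : y ∈ ⨆ ν, ⨆ _ : ν ≠ μ, f.eigenspace ν)
    (h : x + y = 0) : x = 0 := by
  have hd := iSupIndep_def.mp f.eigenspaces_iSupIndep μ
  refine Submodule.disjoint_def.mp hd x hx ?_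
  rw [eq_neg_of_add_eq_zero_left h]
  exact Submodule.neg_mem _ hy

private lemma aux_mem_ne {L : Type*} [AddCommGroup L] [Module ℝ L]
    (f : Module.End ℝ L) {μ ν : ℝ} (h : ν ≠ μ) {x : L}
    (hx : x ∈ f.eigenspace ν) : x ∈ ⨆ κ, ⨆ _ : κ ≠ μ, f.eigenspace κ :=
  Submodule.mem_iSup_of_mem ν (Submodule.mem_iSup_of_mem h hx)

private lemma aux_three {L : Type*} [AddCommGroup L] [Module ℝ L]
    (f : Module.End ℝ L) {a b c : ℝ} (hab : a ≠ b) (hac : a ≠ c) (hbc : b ≠ c)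
    {x y z : L} (hx : x ∈ f.eigenspace a) (hy : y ∈ f.eigenspace b)
    (hz : z ∈ f.eigenspace c) (h : x + y + z = 0) :
    x = 0 ∧ y = 0 ∧ z = 0 := by
  have hx0 : x = 0 := by
    refine aux_eig_zero f hx (Submodule.add_mem _ (aux_mem_ne f hab.symm hy)
      (aux_mem_ne f hac.symm hz)) ?_
    rw [← h]; abel
  have hy0 : y = 0 := by
    refine aux_eig_zero f hy (aux_mem_ne f hbc.symm hz) ?_
    rw [← h, hx0]; abel
  refine ⟨hx0, hy0, ?_⟩
  rw [hx0, hy0] at h; simpa using h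

/-- The centralizer of `X` decomposes as
`Z_L(X) = Z_L(X,H,Y) ⊕ g_1 ⊕ g_2`, an internal direct sum of vector
subspaces of `L`. -/
theorem stmt_8 {L : Type*} [LieRing L] [LieAlgebra ℝ L]
    [Module.Finite ℝ L] [LieAlgebra.IsSemisimple ℝ L]
    (X H Y : L)
    (hHX : ⁅H, X⁆ = (2 : ℝ) • X) (hHY : ⁅H, Y⁆ = (-2 : ℝ) • Y)
    (hXY : ⁅X, Y⁆ = H)
    (g : ℤ → Submodule ℝ L)
    (hg : ∀ j : ℤ, g j = Module.End.eigenspace (LieAlgebra.ad ℝ L H) (j : ℝ))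
    (hspan : g (-2) ⊔ g (-1) ⊔ g 0 ⊔ g 1 ⊔ g 2 = ⊤) :
    (LinearMap.ker (LieAlgebra.ad ℝ L X) =
      (LinearMap.ker (LieAlgebra.ad ℝ L X) ⊓ LinearMap.ker (LieAlgebra.ad ℝ L H) ⊓
        LinearMap.ker (LieAlgebra.ad ℝ L Y)) ⊔ g 1 ⊔ g 2) ∧
    (∀ a ∈ LinearMap.ker (LieAlgebra.ad ℝ L X) ⊓ LinearMap.ker (LieAlgebra.ad ℝ L H) ⊓
        LinearMap.ker (LieAlgebra.ad ℝ L Y),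
      ∀ b ∈ g 1, ∀ c ∈ g 2, a + b + c = 0 → a = 0 ∧ b = 0 ∧ c = 0) := by
  set f := LieAlgebra.ad ℝ L H with hf
  -- membership in g j unfolded
  have hmem : ∀ (j : ℤ) (v : L), v ∈ g j ↔ ⁅H, v⁆ = (j : ℝ) • v := by
    intro j v
    rw [hg j, Module.End.mem_eigenspace_iff, ad_apply]
  -- the eigenspaces g j for |j| > 2 are trivial
  have hbot : ∀ j : ℤ, (j < -2 ∨ 2 < j) → g j = ⊥ := by
    intro j hj
    rw [eq_bot_iff]
    intro v hv
    have key : ∀ k : ℤ, k ≠ j →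
        g k ≤ ⨆ κ, ⨆ _ : κ ≠ (j : ℝ), f.eigenspace κ := by
      intro k hk w hw
      rw [hg] at hw
      exact aux_mem_ne f (by exact_mod_cast hk) hw
    have hsub : g (-2) ⊔ g (-1) ⊔ g 0 ⊔ g 1 ⊔ g 2 ≤
        ⨆ κ, ⨆ _ : κ ≠ (j : ℝ), f.eigenspace κ :=
      sup_le (sup_le (sup_le (sup_le (key (-2) (by omega)) (key (-1) (by omega)))
        (key 0 (by omega))) (key 1 (by omega))) (key 2 (by omega))
    have h1 : v ∈ ⨆ κ, ⨆ _ : κ ≠ (j : ℝ), f.eigenspace κ :=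
      hsub (hspan ▸ Submodule.mem_top)
    rw [hg j] at hv
    exact Submodule.disjoint_def.mp
      (iSupIndep_def.mp f.eigenspaces_iSupIndep (j : ℝ)) v hv h1
  -- bracket with X raises degree by 2
  have hmapX : ∀ (j : ℤ) (v : L), v ∈ g j → ⁅X, v⁆ ∈ g (j + 2) := by
    intro j v hv
    rw [hmem] at hv ⊢
    rw [leibniz_lie, hHX, hv, smul_lie, lie_smul]
    push_cast
    module
  -- bracket with Y lowers degree by 2
  have hmapY : ∀ (j : ℤ) (v : L), v ∈ g j → ⁅Y, v⁆ ∈ g (j - 2) := by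
    intro j v hv
    rw [hmem] at hv ⊢
    rw [leibniz_lie, hHY, hv, smul_lie, lie_smul]
    push_cast
    module
  -- ad X is injective on g (-2)
  have hinj2 : ∀ w : L, w ∈ g (-2) → ⁅X, w⁆ = 0 → w = 0 := by
    intro w hw hXw
    have hYw : ⁅Y, w⁆ = 0 := by
      have := hmapY (-2) w hw
      rw [show ((-2 : ℤ) - 2) = -4 from by norm_num, hbot (-4) (by omega)] at this
      simpa using this
    have hHw : ⁅H, w⁆ = ((-2 : ℤ) : ℝ) • w := (hmem _ _).mp hw
    have : (0 : L) = ((-2 : ℤ) : ℝ) • w := by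
      calc (0 : L) = ⁅X, ⁅Y, w⁆⁆ := by rw [hYw]; simp
        _ = ⁅⁅X, Y⁆, w⁆ + ⁅Y, ⁅X, w⁆⁆ := by rw [leibniz_lie]
        _ = ((-2 : ℤ) : ℝ) • w := by rw [hXY, hXw, hHw]; simp
    have := this.symm
    rcases smul_eq_zero.mp this with h | h
    · norm_num at h
    · exact h
  -- ad X is injective on g (-1)
  have hinj1 : ∀ w : L, w ∈ g (-1) → ⁅X, w⁆ = 0 → w = 0 := by
    intro w hw hXw
    have hYw : ⁅Y, w⁆ = 0 := by
      have := hmapY (-1) w hw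
      rw [show ((-1 : ℤ) - 2) = -3 from by norm_num, hbot (-3) (by omega)] at this
      simpa using this
    have hHw : ⁅H, w⁆ = ((-1 : ℤ) : ℝ) • w := (hmem _ _).mp hw
    have : (0 : L) = ((-1 : ℤ) : ℝ) • w := by
      calc (0 : L) = ⁅X, ⁅Y, w⁆⁆ := by rw [hYw]; simp
        _ = ⁅⁅X, Y⁆, w⁆ + ⁅Y, ⁅X, w⁆⁆ := by rw [leibniz_lie]
        _ = ((-1 : ℤ) : ℝ) • w := by rw [hXY, hXw, hHw]; simp
    rcases smul_eq_zero.mp this.symm with h | h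
    · norm_num at h
    · exact h
  -- g 1 and g 2 are contained in ker (ad X)
  have hg1ker : g 1 ≤ LinearMap.ker (LieAlgebra.ad ℝ L X) := by
    intro v hv
    have := hmapX 1 v hv
    rw [show ((1 : ℤ) + 2) = 3 from by norm_num, hbot 3 (by omega)] at this
    rw [LinearMap.mem_ker, ad_apply]
    simpa using this
  have hg2ker : g 2 ≤ LinearMap.ker (LieAlgebra.ad ℝ L X) := by
    intro v hv
    have := hmapX 2 v hv
    rw [show ((2 : ℤ) + 2) = 4 from by norm_num, hbot 4 (by omega)] at this
    rw [LinearMap.mem_ker, ad_apply]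
    simpa using this
  constructor
  · apply le_antisymm
    · intro v hv
      rw [LinearMap.mem_ker, ad_apply] at hv
      have hvtop : v ∈ g (-2) ⊔ g (-1) ⊔ g 0 ⊔ g 1 ⊔ g 2 := hspan ▸ Submodule.mem_top
      obtain ⟨u1, hu1, v2, hv2, rfl⟩ := Submodule.mem_sup.mp hvtop
      obtain ⟨u2, hu2, v1, hv1, rfl⟩ := Submodule.mem_sup.mp hu1
      obtain ⟨u3, hu3, v0, hv0, rfl⟩ := Submodule.mem_sup.mp hu2
      obtain ⟨vm2, hm2, vm1, hm1, rfl⟩ := Submodule.mem_sup.mp hu3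
      -- brackets with the high components vanish
      have hx1 : ⁅X, v1⁆ = 0 := by
        have := hmapX 1 v1 hv1; rw [show ((1 : ℤ) + 2) = 3 from by norm_num, hbot 3 (by omega)] at this; simpa using this
      have hx2 : ⁅X, v2⁆ = 0 := by
        have := hmapX 2 v2 hv2; rw [show ((2 : ℤ) + 2) = 4 from by norm_num, hbot 4 (by omega)] at this; simpa using this
      -- the three remaining brackets sum to zero
      have hsum3 : ⁅X, vm2⁆ + ⁅X, vm1⁆ + ⁅X, v0⁆ = 0 := by
        have : ⁅X, vm2⁆ + ⁅X, vm1⁆ + ⁅X, v0⁆ + ⁅X, v1⁆ + ⁅X, v2⁆ = 0 := by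
          rw [← hv]; simp only [lie_add]
        rw [hx1, hx2] at this; simpa using this
      have e0 : ⁅X, vm2⁆ ∈ f.eigenspace (((-2 : ℤ) + 2 : ℤ) : ℝ) := by
        rw [← hg]; exact hmapX (-2) vm2 hm2
      have e1 : ⁅X, vm1⁆ ∈ f.eigenspace (((-1 : ℤ) + 2 : ℤ) : ℝ) := by
        rw [← hg]; exact hmapX (-1) vm1 hm1
      have e2 : ⁅X, v0⁆ ∈ f.eigenspace (((0 : ℤ) + 2 : ℤ) : ℝ) := by
        rw [← hg]; exact hmapX 0 v0 hv0
      obtain ⟨z0, z1, z2⟩ := aux_three f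
        (by push_cast; norm_num : ((((-2 : ℤ) + 2 : ℤ)) : ℝ) ≠ (((-1 : ℤ) + 2 : ℤ) : ℝ))
        (by push_cast; norm_num) (by push_cast; norm_num) e0 e1 e2 hsum3
      have hm2z : vm2 = 0 := hinj2 vm2 hm2 z0
      have hm1z : vm1 = 0 := hinj1 vm1 hm1 z1
      -- v0 lies in the triple centralizer
      have hv0Y : ⁅Y, v0⁆ = 0 := by
        have hm := hmapY 0 v0 hv0
        rw [show ((0 : ℤ) - 2) = -2 from by norm_num] at hm
        refine hinj2 ⁅Y, v0⁆ hm ?_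
        have hHv0 : ⁅H, v0⁆ = ((0 : ℤ) : ℝ) • v0 := (hmem _ _).mp hv0
        calc ⁅X, ⁅Y, v0⁆⁆ = ⁅⁅X, Y⁆, v0⁆ + ⁅Y, ⁅X, v0⁆⁆ := by rw [leibniz_lie]
          _ = 0 := by rw [hXY, z2, hHv0]; simp
      have hv0Z : v0 ∈ LinearMap.ker (LieAlgebra.ad ℝ L X) ⊓
          LinearMap.ker (LieAlgebra.ad ℝ L H) ⊓ LinearMap.ker (LieAlgebra.ad ℝ L Y) := by
        refine Submodule.mem_inf.mpr ⟨Submodule.mem_inf.mpr ⟨?_, ?_⟩, ?_⟩ <;>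
          rw [LinearMap.mem_ker, ad_apply]
        · exact z2
        · rw [(hmem _ _).mp hv0]; simp
        · exact hv0Y
      rw [hm2z, hm1z]
      refine Submodule.add_mem _ (Submodule.add_mem _ ?_ ?_) ?_
      · exact Submodule.mem_sup_left (Submodule.mem_sup_left (by rw [zero_add, zero_add]; exact hv0Z))
      · exact Submodule.mem_sup_left (Submodule.mem_sup_right hv1)
      · exact Submodule.mem_sup_right hv2
    · refine sup_le (sup_le ?_ hg1ker) hg2ker
      exact le_trans inf_le_left inf_le_left
  · intro a ha b hb c hc habc
    have haH : a ∈ f.eigenspace (((0 : ℤ)) : ℝ) := by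
      rw [Module.End.mem_eigenspace_iff]
      have h0 : f a = 0 := LinearMap.mem_ker.mp
        (Submodule.mem_inf.mp (Submodule.mem_inf.mp ha).1).2
      simp [h0]
    rw [hg] at hb hc
    exact aux_three f (by norm_num) (by norm_num) (by norm_num) haH hb hc habc
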